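/- arXiv:1109.5926 — 2 statements merged into one kernel-verified Lean document; each statement's English description precedes it below -/
import Mathlib

section
/- Let ℓ ≥ 2 and γ = 2ℓ, and assume g_i ≥ 1 for all i ∈ ℤ/γℤ. Define the multidegree d on C by d_i = g_i − 1 if i is represented by an odd element of {1, …, 2ℓ} and d_i = g_i + 1 if i is represented by an even element of {1, …, 2ℓ}. Then the number of admissible subsets Z ⊆ ℤ/γℤ equals 1 + ℓ². (Corollary 4.4 of the paper: this number is the number of irreducible components of the Brill–Noether locus W_d(C).) -/
open Finset

/-- The number of connected components of the subcurve of a circular curve indexed by `S`: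
the number of `i ∈ S` with `i − 1 ∉ S`. -/
def nCirc {γ : ℕ} (S : Finset (ZMod γ)) : ℕ :=
  (S.filter (fun i => i - 1 ∉ S)).card

/-- The multidegree `e` on the subcurve `Z` obtained from `d` by subtracting the points of
intersection of `Z` with its complement: `e i = d i − [i−1 ∉ Z] − [i+1 ∉ Z]`. -/
def eMult {γ : ℕ} (d : ZMod γ → ℤ) (Z : Finset (ZMod γ)) (i : ZMod γ) : ℤ :=
  d i - (if i - 1 ∈ Z then 0 else 1) - (if i + 1 ∈ Z then 0 else 1)

/-- The genus of the subcurve of the circular curve indexed by `Z`: it is `Σ_{i∈Z} g i`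
for proper `Z`, and the total genus `1 + Σ_i g i` for `Z = ℤ/γℤ`. -/
def gSub {γ : ℕ} [NeZero γ] (g : ZMod γ → ℕ) (Z : Finset (ZMod γ)) : ℤ :=
  if Z = Finset.univ then 1 + ∑ i, (g i : ℤ) else ∑ i ∈ Z, (g i : ℤ)

/-- `Z` is admissible for the multidegree `d` if `Z` is nonempty and connected, and the
multidegree `e = eMult d Z` is effective on `Z`, of total degree `g_Z − 1` on `Z`, and
semistable on `Z`. -/
def Admissible {γ : ℕ} [NeZero γ] (g : ZMod γ → ℕ) (d : ZMod γ → ℤ)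
    (Z : Finset (ZMod γ)) : Prop :=
  Z.Nonempty ∧ (Z = Finset.univ ∨ nCirc Z = 1) ∧
    (∀ i ∈ Z, 0 ≤ eMult d Z i) ∧
    (∑ i ∈ Z, eMult d Z i = gSub g Z - 1) ∧
    ∀ Y : Finset (ZMod γ), Y ⊆ Z → Y.Nonempty → Y ≠ Z →
      (∑ i ∈ Y, eMult d Z i) ≥ (∑ i ∈ Y, (g i : ℤ)) - nCirc Y

namespace CircAux

variable {γ : ℕ}

/-- The arc of length `L` starting at `a`. -/
def arc (a : ZMod γ) (L : ℕ) : Finset (ZMod γ) :=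
  (Finset.range L).image (fun j : ℕ => a + (j : ZMod γ))

lemma mem_arc [NeZero γ] {a i : ZMod γ} {L : ℕ} (hL : L ≤ γ) :
    i ∈ arc a L ↔ (i - a).val < L := by
  simp only [arc, mem_image, mem_range]
  constructor
  · rintro ⟨j, hj, rfl⟩
    rwa [add_sub_cancel_left, ZMod.val_cast_of_lt (lt_of_lt_of_le hj hL)]
  · intro h
    exact ⟨(i - a).val, h, by rw [ZMod.natCast_zmod_val]; ring⟩

lemma self_mem_arc [NeZero γ] {a : ZMod γ} {L : ℕ} (h1 : 1 ≤ L) (hL : L ≤ γ) :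
    a ∈ arc a L := by
  rw [mem_arc hL]
  simpa using Nat.pos_of_ne_zero (by omega : L ≠ 0)

lemma card_arc [NeZero γ] {a : ZMod γ} {L : ℕ} (hL : L ≤ γ) : (arc a L).card = L := by
  rw [arc, Finset.card_image_of_injOn, Finset.card_range]
  intro x hx y hy hxy
  simp only [mem_coe, mem_range] at hx hy
  have := congrArg (fun z => (z - a).val) hxy
  simpa [ZMod.val_cast_of_lt (lt_of_lt_of_le hx hL),
    ZMod.val_cast_of_lt (lt_of_lt_of_le hy hL)] using this

lemma sum_arc [NeZero γ] {a : ZMod γ} {L : ℕ} (hL : L ≤ γ) (f : ZMod γ → ℤ) :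
    ∑ i ∈ arc a L, f i = ∑ j ∈ Finset.range L, f (a + (j : ZMod γ)) := by
  rw [arc, Finset.sum_image]
  intro x hx y hy hxy
  simp only [mem_coe, mem_range] at hx hy
  have := congrArg (fun z => (z - a).val) hxy
  simpa [ZMod.val_cast_of_lt (lt_of_lt_of_le hx hL),
    ZMod.val_cast_of_lt (lt_of_lt_of_le hy hL)] using this

end CircAux

namespace CircAux2
open CircAux

variable {γ : ℕ}

lemma neg_one_eq [NeZero γ] : (-1 : ZMod γ) = ((γ - 1 : ℕ) : ZMod γ) := by
  have h1 : 1 ≤ γ := Nat.one_le_iff_ne_zero.2 (NeZero.ne γ)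
  have : ((γ - 1 : ℕ) : ZMod γ) = (γ : ZMod γ) - 1 := by
    push_cast [Nat.cast_sub h1]; ring
  rw [this, ZMod.natCast_self, zero_sub]

lemma val_neg_one' [NeZero γ] : (-1 : ZMod γ).val = γ - 1 := by
  have h1 : 1 ≤ γ := Nat.one_le_iff_ne_zero.2 (NeZero.ne γ)
  rw [neg_one_eq, ZMod.val_cast_of_lt (by omega)]

/-- `a - 1 ∉ arc a L` when `L < γ`. -/
lemma start_pred_not_mem [NeZero γ] {a : ZMod γ} {L : ℕ} (hL : L < γ) :
    a - 1 ∉ arc a L := by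
  rw [mem_arc hL.le]
  have : a - 1 - a = -1 := by ring
  rw [this, val_neg_one']
  omega

/-- the only start of an arc is `a`. -/
lemma start_unique [NeZero γ] {a i : ZMod γ} {L : ℕ} (h1 : 1 ≤ L) (hL : L < γ)
    (hi : i ∈ arc a L) (hs : i - 1 ∉ arc a L) : i = a := by
  by_contra hne
  rw [mem_arc hL.le] at hi
  have hv0 : (i - a).val ≠ 0 := by
    intro h
    exact hne (by rwa [ZMod.val_eq_zero, sub_eq_zero] at h)
  apply hs
  rw [mem_arc hL.le]
  have : i - 1 - a = (i - a) - 1 := by ring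
  rw [this, ← ZMod.natCast_zmod_val (i - a)]
  have hcast : ((i - a).val : ZMod γ) - 1 = (((i - a).val - 1 : ℕ) : ZMod γ) := by
    push_cast [Nat.cast_sub (Nat.one_le_iff_ne_zero.2 hv0)]; ring
  rw [hcast, ZMod.val_cast_of_lt (by omega)]
  omega

lemma arc_filter_start [NeZero γ] {a : ZMod γ} {L : ℕ} (h1 : 1 ≤ L) (hL : L < γ) :
    (arc a L).filter (fun i => i - 1 ∉ arc a L) = {a} := by
  ext i
  simp only [mem_filter, mem_singleton]
  constructor
  · rintro ⟨hi, hs⟩; exact start_unique h1 hL hi hs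
  · rintro rfl
    exact ⟨self_mem_arc h1 hL.le, start_pred_not_mem hL⟩

lemma nCirc_arc [NeZero γ] {a : ZMod γ} {L : ℕ} (h1 : 1 ≤ L) (hL : L < γ) :
    nCirc (arc a L) = 1 := by
  rw [nCirc, arc_filter_start h1 hL, card_singleton]

/-- `b + 1 ∉ arc a L` where `b = a + (L-1)`, when `1 ≤ L < γ`. -/
lemma end_succ_not_mem [NeZero γ] {a : ZMod γ} {L : ℕ} (h1 : 1 ≤ L) (hL : L < γ) :
    a + ((L - 1 : ℕ) : ZMod γ) + 1 ∉ arc a L := by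
  rw [mem_arc hL.le]
  have : a + ((L - 1 : ℕ) : ZMod γ) + 1 - a = ((L : ℕ) : ZMod γ) := by
    push_cast [Nat.cast_sub h1]; ring
  rw [this, ZMod.val_cast_of_lt hL]
  omega

lemma end_unique [NeZero γ] {a i : ZMod γ} {L : ℕ} (h1 : 1 ≤ L) (hL : L < γ)
    (hi : i ∈ arc a L) (hs : i + 1 ∉ arc a L) : i = a + ((L - 1 : ℕ) : ZMod γ) := by
  rw [mem_arc hL.le] at hi
  by_contra hne
  have hvne : (i - a).val ≠ L - 1 := by
    intro h
    apply hne
    have : i = a + (i - a) := by ring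
    rw [this, ← ZMod.natCast_zmod_val (i - a), h]
  apply hs
  rw [mem_arc hL.le]
  have : i + 1 - a = (i - a) + 1 := by ring
  rw [this, ← ZMod.natCast_zmod_val (i - a)]
  have hcast : ((i - a).val : ZMod γ) + 1 = (((i - a).val + 1 : ℕ) : ZMod γ) := by push_cast; ring
  rw [hcast, ZMod.val_cast_of_lt (by omega)]
  omega

lemma arc_filter_end [NeZero γ] {a : ZMod γ} {L : ℕ} (h1 : 1 ≤ L) (hL : L < γ) :
    (arc a L).filter (fun i => i + 1 ∉ arc a L) = {a + ((L - 1 : ℕ) : ZMod γ)} := by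
  ext i
  simp only [mem_filter, mem_singleton]
  constructor
  · rintro ⟨hi, hs⟩; exact end_unique h1 hL hi hs
  · rintro rfl
    refine ⟨?_, end_succ_not_mem h1 hL⟩
    rw [mem_arc hL.le, add_sub_cancel_left, ZMod.val_cast_of_lt (by omega)]
    omega

lemma univ_eq_arc [NeZero γ] : (Finset.univ : Finset (ZMod γ)) = arc 0 γ := by
  symm
  apply Finset.eq_univ_of_card
  rw [card_arc le_rfl, ZMod.card]

end CircAux2

namespace CircAux3
open CircAux CircAux2

variable {γ : ℕ}

lemma even_val_add [NeZero γ] (h2 : 2 ∣ γ) (a : ZMod γ) (j : ℕ) :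
    Even ((a + (j : ZMod γ)).val) ↔ Even (a.val + j) := by
  rw [ZMod.val_add, ZMod.val_natCast]
  rw [Nat.even_iff, Nat.even_iff, Nat.mod_mod_of_dvd _ h2]
  constructor <;> intro h <;>
    [rwa [Nat.add_mod, Nat.mod_mod_of_dvd _ h2, ← Nat.add_mod] at h;
     rwa [Nat.add_mod, Nat.mod_mod_of_dvd _ h2, ← Nat.add_mod]]

lemma even_val_sub_one [NeZero γ] (h2 : 2 ∣ γ) {i : ZMod γ} (h : ¬ Even i.val) :
    Even ((i - 1).val) := by
  have h1 : 2 ≤ γ := Nat.le_of_dvd (Nat.pos_of_ne_zero (NeZero.ne γ)) h2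
  have : i - 1 = i + ((γ - 1 : ℕ) : ZMod γ) := by rw [← neg_one_eq]; ring
  rw [this, even_val_add h2]
  rcases h2 with ⟨m, rfl⟩
  simp only [Nat.even_add, Nat.even_sub (by omega : 1 ≤ 2*m)] at *
  simp_all

lemma sum_sgn_range (v : ℕ) (L : ℕ) :
    ∑ j ∈ Finset.range L, (if Even (v + j) then (1:ℤ) else -1) =
      if Even L then 0 else (if Even v then 1 else -1) := by
  induction L with
  | zero => simp
  | succ n ih =>
    rw [Finset.sum_range_succ, ih]
    by_cases hv : Even v <;> by_cases hn : Even n <;>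
      simp [Nat.even_add, Nat.even_add_one, hv, hn]

lemma sum_indicator (Y : Finset (ZMod γ)) (P : ZMod γ → Prop) [DecidablePred P] :
    ∑ j ∈ Y, (if P j then (0:ℤ) else 1) = ((Y.filter (fun j => ¬ P j)).card : ℤ) := by
  rw [← Finset.sum_boole]
  apply Finset.sum_congr rfl
  intro j _
  by_cases h : P j <;> simp [h]

lemma nCirc_sum (Y : Finset (ZMod γ)) :
    ∑ j ∈ Y, (if j - 1 ∈ Y then (0:ℤ) else 1) = (nCirc Y : ℤ) := by
  rw [sum_indicator, nCirc]

end CircAux3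

namespace CircAux4
open CircAux CircAux2 CircAux3

variable {γ : ℕ}

lemma core [NeZero γ] (h2 : 2 ∣ γ) (c : ZMod γ → ℤ) (Y : Finset (ZMod γ))
    (H1 : ∀ i ∈ Y, Even i.val → 0 ≤ c i)
    (H2 : ∀ i ∈ Y, ¬ Even i.val → -1 ≤ c i)
    (H3 : ∀ i ∈ Y, ¬ Even i.val → i - 1 ∈ Y →
      (if i - 1 - 1 ∈ Y then (1:ℤ) ≤ c (i - 1) else 0 ≤ c (i - 1))) :
    -(nCirc Y : ℤ) ≤ ∑ i ∈ Y, c i := by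
  classical
  set F : ZMod γ → ℤ := fun j => c j + (if j - 1 ∈ Y then 0 else 1) with hF
  have hsum : ∑ j ∈ Y, F j = (∑ i ∈ Y, c i) + (nCirc Y : ℤ) := by
    rw [hF, Finset.sum_add_distrib, nCirc_sum]
  suffices h : 0 ≤ ∑ j ∈ Y, F j by linarith
  set E := Y.filter (fun i => Even i.val) with hE
  set O := Y.filter (fun i => ¬ Even i.val) with hO
  have hYOE : ∑ j ∈ Y, F j = ∑ j ∈ E, F j + ∑ j ∈ O, F j := by
    rw [hE, hO, Finset.sum_filter_add_sum_filter_not]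
  set O' := O.filter (fun i => i - 1 ∈ Y) with hO'
  have hO'O : O' ⊆ O := Finset.filter_subset _ _
  have hOY : O ⊆ Y := Finset.filter_subset _ _
  have hinj : Set.InjOn (fun i : ZMod γ => i - 1) O' := by
    intro x _ y _ hxy
    simpa using sub_left_injective hxy
  have himg : O'.image (fun i => i - 1) ⊆ E := by
    intro j hj
    simp only [Finset.mem_image] at hj
    obtain ⟨i, hi, rfl⟩ := hj
    rw [hO', Finset.mem_filter, hO, Finset.mem_filter] at hi
    rw [hE, Finset.mem_filter]
    exact ⟨hi.2, even_val_sub_one h2 hi.1.2⟩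
  have hFE : ∀ j ∈ E, 0 ≤ F j := by
    intro j hj
    rw [hE, Finset.mem_filter] at hj
    have := H1 j hj.1 hj.2
    rw [hF]
    by_cases h : j - 1 ∈ Y <;> simp [h] <;> linarith
  have hFimg : ∀ j ∈ O'.image (fun i => i - 1), 1 ≤ F j := by
    intro j hj
    simp only [Finset.mem_image] at hj
    obtain ⟨i, hi, rfl⟩ := hj
    rw [hO', Finset.mem_filter, hO, Finset.mem_filter] at hi
    have h3 := H3 i hi.1.1 hi.1.2 hi.2
    rw [hF]
    by_cases h : i - 1 - 1 ∈ Y <;> simp [h] at h3 ⊢ <;> linarith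
  have hcard : (O'.image (fun i => i - 1)).card = O'.card :=
    Finset.card_image_of_injOn hinj
  have h1 : (O'.card : ℤ) ≤ ∑ j ∈ E, F j := by
    calc (O'.card : ℤ) = ∑ _j ∈ O'.image (fun i => i - 1), (1:ℤ) := by
          rw [Finset.sum_const, hcard]; ring
      _ ≤ ∑ j ∈ O'.image (fun i => i - 1), F j := Finset.sum_le_sum hFimg
      _ ≤ ∑ j ∈ E, F j :=
          Finset.sum_le_sum_of_subset_of_nonneg himg (fun j hj _ => hFE j hj)
  have h2' : -(O'.card : ℤ) ≤ ∑ j ∈ O, F j := by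
    have hpt : ∀ j ∈ O, (if j ∈ O' then (-1:ℤ) else 0) ≤ F j := by
      intro j hj
      have hjY : j ∈ Y := hOY hj
      have hodd : ¬ Even j.val := (Finset.mem_filter.1 hj).2
      have hc := H2 j hjY hodd
      by_cases h : j ∈ O'
      · have hmem : j - 1 ∈ Y := (Finset.mem_filter.1 h).2
        simp [h, hF, hmem]
        linarith
      · have hmem : j - 1 ∉ Y := by
          intro hm
          exact h (Finset.mem_filter.2 ⟨hj, hm⟩)
        simp [h, hF, hmem]
        linarith
    calc -(O'.card : ℤ) = ∑ j ∈ O, (if j ∈ O' then (-1:ℤ) else 0) := by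
          rw [Finset.sum_ite_mem, Finset.inter_eq_right.2 hO'O, Finset.sum_const]
          simp
      _ ≤ ∑ j ∈ O, F j := Finset.sum_le_sum hpt
  rw [hYOE]
  linarith

end CircAux4

namespace CircAux5
open CircAux CircAux2 CircAux3 CircAux4

variable {γ : ℕ}

/-- The semistability inequality, under interiority conditions on `Y`. -/
lemma semi [NeZero γ] (h2 : 2 ∣ γ) (g : ZMod γ → ℕ) (d : ZMod γ → ℤ)
    (hd' : ∀ i : ZMod γ, d i = (g i : ℤ) + (if Even i.val then 1 else -1))
    (Z Y : Finset (ZMod γ)) (hYZ : Y ⊆ Z)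
    (C1 : ∀ i ∈ Y, Even i.val → (i - 1 ∈ Z ∨ i + 1 ∈ Z))
    (C2 : ∀ i ∈ Y, ¬ Even i.val → (i - 1 ∈ Z ∧ i + 1 ∈ Z)) :
    (∑ i ∈ Y, eMult d Z i) ≥ (∑ i ∈ Y, (g i : ℤ)) - nCirc Y := by
  classical
  have key := core h2 (fun i => eMult d Z i - (g i : ℤ)) Y ?_ ?_ ?_
  · have : ∑ i ∈ Y, (eMult d Z i - (g i : ℤ)) =
        ∑ i ∈ Y, eMult d Z i - ∑ i ∈ Y, (g i : ℤ) := Finset.sum_sub_distrib _ _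
    rw [this] at key
    linarith
  · intro i hi hev
    obtain h | h := C1 i hi hev
    · simp only [eMult, hd' i, hev, if_pos, h]
      by_cases h' : i + 1 ∈ Z <;> simp [h']
    · simp only [eMult, hd' i, hev, if_pos, h]
      by_cases h' : i - 1 ∈ Z <;> simp [h', h]
  · intro i hi hodd
    obtain ⟨ha, hb⟩ := C2 i hi hodd
    simp [eMult, hd' i, hodd, ha, hb]
  · intro i hi hodd hi1
    have hev : Even ((i-1).val) := even_val_sub_one h2 hodd
    have hiZ : i - 1 - 1 ∈ Y → i - 1 - 1 ∈ Z := fun h => hYZ h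
    have hplus : i - 1 + 1 ∈ Z := by
      have : i - 1 + 1 = i := by ring
      rw [this]; exact hYZ hi
    have hiZ2 : i ∈ Z := hYZ hi
    by_cases h : i - 1 - 1 ∈ Y
    · simp only [if_pos h]
      simp [eMult, hd' (i-1), hev, hiZ h, hplus, hiZ2]
    · simp only [if_neg h]
      simp only [eMult, hd' (i-1), hev, if_pos, hplus]
      by_cases h' : i - 1 - 1 ∈ Z <;> simp [h']

/-- Total degree of `eMult` on `Z`. -/
lemma sum_eMult [NeZero γ] (d : ZMod γ → ℤ) (Z : Finset (ZMod γ)) :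
    ∑ i ∈ Z, eMult d Z i = ∑ i ∈ Z, d i
      - ((Z.filter (fun i => i - 1 ∉ Z)).card : ℤ)
      - ((Z.filter (fun i => i + 1 ∉ Z)).card : ℤ) := by
  simp only [eMult]
  rw [Finset.sum_sub_distrib, Finset.sum_sub_distrib,
    sum_indicator Z (fun i => i - 1 ∈ Z), sum_indicator Z (fun i => i + 1 ∈ Z)]

end CircAux5

namespace CircAux6
open CircAux CircAux2 CircAux3 CircAux4 CircAux5

variable {γ : ℕ}

lemma sum_sgn_arc [NeZero γ] (h2 : 2 ∣ γ) {a : ZMod γ} {L : ℕ} (hL : L ≤ γ) :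
    ∑ i ∈ arc a L, (if Even i.val then (1:ℤ) else -1) =
      if Even L then 0 else (if Even a.val then 1 else -1) := by
  rw [sum_arc hL, ← sum_sgn_range a.val L]
  apply Finset.sum_congr rfl
  intro j _
  simp only [even_val_add h2 a j]

lemma sum_d [NeZero γ] (g : ZMod γ → ℕ) (d : ZMod γ → ℤ)
    (hd' : ∀ i : ZMod γ, d i = (g i : ℤ) + (if Even i.val then 1 else -1))
    (Z : Finset (ZMod γ)) :
    ∑ i ∈ Z, d i = (∑ i ∈ Z, (g i : ℤ)) + ∑ i ∈ Z, (if Even i.val then (1:ℤ) else -1) := by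
  rw [← Finset.sum_add_distrib]
  exact Finset.sum_congr rfl (fun i _ => hd' i)

lemma univ_admissible [NeZero γ] (h2 : 2 ∣ γ) (g : ZMod γ → ℕ) (hg : ∀ i, 1 ≤ g i)
    (d : ZMod γ → ℤ)
    (hd' : ∀ i : ZMod γ, d i = (g i : ℤ) + (if Even i.val then 1 else -1)) :
    Admissible g d (Finset.univ : Finset (ZMod γ)) := by
  have hEuniv : ∀ i : ZMod γ, eMult d Finset.univ i = d i := by
    intro i; simp [eMult]
  refine ⟨Finset.univ_nonempty, Or.inl rfl, ?_, ?_, ?_⟩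
  · intro i _
    rw [hEuniv, hd' i]
    have : (1:ℤ) ≤ (g i : ℤ) := by exact_mod_cast hg i
    split_ifs <;> linarith
  · have hsgn : ∑ i : ZMod γ, (if Even i.val then (1:ℤ) else -1) = 0 := by
      rw [univ_eq_arc, sum_sgn_arc h2 le_rfl, if_pos (even_iff_two_dvd.2 h2)]
    rw [Finset.sum_congr rfl (fun i _ => hEuniv i), sum_d g d hd', hsgn, gSub, if_pos rfl]
    ring
  · intro Y hYZ _ _
    exact semi h2 g d hd' Finset.univ Y hYZ (fun i _ _ => Or.inl (Finset.mem_univ _))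
      (fun i _ _ => ⟨Finset.mem_univ _, Finset.mem_univ _⟩)

lemma arc_ne_univ [NeZero γ] {a : ZMod γ} {L : ℕ} (hL : L < γ) :
    arc a L ≠ Finset.univ := by
  intro h
  have := card_arc (a := a) hL.le
  rw [h, Finset.card_univ, ZMod.card] at this
  omega

lemma arc_admissible [NeZero γ] (h2 : 2 ∣ γ) (g : ZMod γ → ℕ) (hg : ∀ i, 1 ≤ g i)
    (d : ZMod γ → ℤ)
    (hd' : ∀ i : ZMod γ, d i = (g i : ℤ) + (if Even i.val then 1 else -1))
    {a : ZMod γ} {L : ℕ} (hea : Even a.val) (hoL : ¬ Even L) (h1 : 1 ≤ L) (hL : L < γ) :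
    Admissible g d (arc a L) := by
  set Z := arc a L with hZ
  set b := a + ((L - 1 : ℕ) : ZMod γ) with hb
  have hstart : ∀ i ∈ Z, i ≠ a → i - 1 ∈ Z := by
    intro i hi hne
    by_contra h
    exact hne (start_unique h1 hL hi h)
  have hend : ∀ i ∈ Z, i ≠ b → i + 1 ∈ Z := by
    intro i hi hne
    by_contra h
    exact hne (end_unique h1 hL hi h)
  have heb : Even b.val := by
    rw [hb, even_val_add h2, Nat.even_add, Nat.even_sub h1]
    simp [hea, hoL]
  have hodd_ne : ∀ i : ZMod γ, ¬ Even i.val → i ≠ a ∧ i ≠ b := by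
    intro i hi
    constructor <;> rintro rfl <;> [exact hi hea; exact hi heb]
  have hgi : ∀ i : ZMod γ, (1:ℤ) ≤ (g i : ℤ) := fun i => by exact_mod_cast hg i
  refine ⟨⟨a, self_mem_arc h1 hL.le⟩, Or.inr (nCirc_arc h1 hL), ?_, ?_, ?_⟩
  · intro i hi
    by_cases hev : Even i.val
    · have := hgi i
      simp only [eMult, hd' i, hev, if_pos]
      split_ifs <;> linarith
    · obtain ⟨hna, hnb⟩ := hodd_ne i hev
      have hm1 : i - 1 ∈ Z := hstart i hi hna
      have hp1 : i + 1 ∈ Z := hend i hi hnb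
      have := hgi i
      simp only [eMult, hd' i, hev, if_neg, hm1, hp1, if_pos]
      simp
      linarith
  · rw [sum_eMult, sum_d g d hd', sum_sgn_arc h2 hL.le, if_neg hoL, if_pos hea]
    rw [hZ, arc_filter_start h1 hL, arc_filter_end h1 hL]
    rw [gSub, if_neg (arc_ne_univ hL)]
    simp
  · intro Y hYZ hYne hYneZ
    have hL2 : 2 ≤ L := by
      rcases Nat.lt_or_ge L 2 with h | h
      · exfalso
        interval_cases L
        apply hYneZ
        have : Z = {a} := by
          ext i
          rw [hZ, mem_arc hL.le, Finset.mem_singleton]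
          constructor
          · intro hv
            have : (i - a).val = 0 := by omega
            rw [ZMod.val_eq_zero, sub_eq_zero] at this
            exact this
          · rintro rfl; simp
        rw [this] at hYZ ⊢
        obtain ⟨x, hx⟩ := hYne
        have := hYZ hx
        rw [Finset.mem_singleton] at this
        subst this
        apply Finset.Subset.antisymm hYZ
        intro y hy
        rw [Finset.mem_singleton] at hy
        subst hy
        exact hx
      · exact h
    have hba : b ≠ a := by
      rw [hb]
      intro h
      have h0 : ((L - 1 : ℕ) : ZMod γ) = 0 := by
        have := congrArg (fun z => z - a) h
        simpa using this
      have := congrArg ZMod.val h0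
      rw [ZMod.val_cast_of_lt (by omega), ZMod.val_zero] at this
      omega
    apply semi h2 g d hd' Z Y hYZ
    · intro i hi hev
      by_cases hib : i = b
      · subst hib
        exact Or.inl (hstart _ (hYZ hi) hba)
      · exact Or.inr (hend _ (hYZ hi) hib)
    · intro i hi hodd
      obtain ⟨hna, hnb⟩ := hodd_ne i hodd
      exact ⟨hstart _ (hYZ hi) hna, hend _ (hYZ hi) hnb⟩

end CircAux6

namespace CircAux7
open CircAux CircAux2 CircAux3 CircAux4 CircAux5 CircAux6

variable {γ : ℕ}

lemma range_of_predClosed {S : Finset ℕ} {n : ℕ} (hS : S ⊆ Finset.range n)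
    (h : ∀ j, j + 1 ∈ S → j ∈ S) : S = Finset.range S.card := by
  have down : ∀ m, m ∈ S → ∀ k, k ≤ m → k ∈ S := by
    intro m
    induction m with
    | zero =>
      intro hm k hk
      rw [Nat.le_zero.1 hk]
      exact hm
    | succ n ih =>
      intro hm k hk
      rcases Nat.eq_or_lt_of_le hk with rfl | hlt
      · exact hm
      · exact ih (h n hm) k (by omega)
  have key : ∀ k, k ∈ S ↔ k < S.card := by
    intro k
    constructor
    · intro hk
      have hsub : Finset.range (k + 1) ⊆ S := by
        intro x hx
        exact down k hk x (Nat.lt_succ_iff.1 (Finset.mem_range.1 hx))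
      have := Finset.card_le_card hsub
      rw [Finset.card_range] at this
      omega
    · intro hk
      by_contra hk'
      have hsub : S ⊆ Finset.range k := by
        intro m hm
        rw [Finset.mem_range]
        by_contra hmk
        exact hk' (down m hm k (by omega))
      have := Finset.card_le_card hsub
      rw [Finset.card_range] at this
      omega
  ext k
  rw [key, Finset.mem_range]

lemma admissible_shape [NeZero γ] (h2 : 2 ∣ γ) (g : ZMod γ → ℕ)
    (d : ZMod γ → ℤ)
    (hd' : ∀ i : ZMod γ, d i = (g i : ℤ) + (if Even i.val then 1 else -1))
    {Z : Finset (ZMod γ)} (hA : Admissible g d Z) :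
    Z = Finset.univ ∨
      ∃ a : ZMod γ, ∃ L : ℕ, Even a.val ∧ ¬ Even L ∧ 1 ≤ L ∧ L < γ ∧ Z = arc a L := by
  classical
  obtain ⟨hne, hconn, _, hdeg, _⟩ := hA
  by_cases hu : Z = Finset.univ
  · exact Or.inl hu
  right
  have hcn : nCirc Z = 1 := hconn.resolve_left hu
  rw [nCirc, Finset.card_eq_one] at hcn
  obtain ⟨a, ha⟩ := hcn
  have haZ : a ∈ Z := by
    have : a ∈ Z.filter (fun i => i - 1 ∉ Z) := by rw [ha]; exact Finset.mem_singleton_self a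
    exact (Finset.mem_filter.1 this).1
  have huniq : ∀ i ∈ Z, i - 1 ∉ Z → i = a := by
    intro i hi hs
    have : i ∈ Z.filter (fun j => j - 1 ∉ Z) := Finset.mem_filter.2 ⟨hi, hs⟩
    rw [ha, Finset.mem_singleton] at this
    exact this
  set L := Z.card with hLdef
  have hL : L < γ := by
    have hss : Z ⊂ Finset.univ := Finset.ssubset_univ_iff.2 hu
    have := Finset.card_lt_card hss
    rwa [Finset.card_univ, ZMod.card] at this
  have h1 : 1 ≤ L := Finset.card_pos.2 hne
  -- Z is the arc from a of length L
  set T : Finset ℕ := (Finset.range γ).filter (fun j : ℕ => a + (j : ZMod γ) ∈ Z) with hT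
  have hTsub : T ⊆ Finset.range γ := Finset.filter_subset _ _
  have hTpred : ∀ j, j + 1 ∈ T → j ∈ T := by
    intro j hj
    rw [hT, Finset.mem_filter, Finset.mem_range] at hj
    obtain ⟨hjγ, hjZ⟩ := hj
    rw [hT, Finset.mem_filter, Finset.mem_range]
    refine ⟨by omega, ?_⟩
    by_contra h
    have hsub1 : a + ((j + 1 : ℕ) : ZMod γ) - 1 = a + (j : ZMod γ) := by
      push_cast; ring
    have := huniq _ hjZ (by rw [hsub1]; exact h)
    have h0 : ((j + 1 : ℕ) : ZMod γ) = 0 := by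
      have := congrArg (fun z => z - a) this
      simpa using this
    have := congrArg ZMod.val h0
    rw [ZMod.val_cast_of_lt (by omega), ZMod.val_zero] at this
    omega
  have hTimg : Z = T.image (fun j : ℕ => a + (j : ZMod γ)) := by
    ext i
    constructor
    · intro hi
      rw [Finset.mem_image]
      refine ⟨(i - a).val, ?_, by rw [ZMod.natCast_zmod_val]; ring⟩
      rw [hT, Finset.mem_filter, Finset.mem_range]
      refine ⟨ZMod.val_lt _, ?_⟩
      rw [ZMod.natCast_zmod_val]
      have : a + (i - a) = i := by ring
      rwa [this]
    · intro hi
      rw [Finset.mem_image] at hi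
      obtain ⟨j, hj, rfl⟩ := hi
      exact (Finset.mem_filter.1 hj).2
  have hinjT : Set.InjOn (fun j : ℕ => a + (j : ZMod γ)) T := by
    intro x hx y hy hxy
    have hxγ := Finset.mem_range.1 (hTsub hx)
    have hyγ := Finset.mem_range.1 (hTsub hy)
    have := congrArg (fun z => (z - a).val) hxy
    simpa [ZMod.val_cast_of_lt hxγ, ZMod.val_cast_of_lt hyγ] using this
  have hTcard : T.card = L := by
    rw [hLdef, hTimg, Finset.card_image_of_injOn hinjT]
  have hTeq : T = Finset.range L := by
    rw [← hTcard]
    exact range_of_predClosed hTsub hTpred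
  have hZarc : Z = arc a L := by
    rw [hTimg, hTeq, arc]
  -- now use the degree condition
  rw [sum_eMult, sum_d g d hd', gSub, if_neg hu, hZarc, arc_filter_start h1 hL,
    arc_filter_end h1 hL, sum_sgn_arc h2 hL.le] at hdeg
  simp only [Finset.card_singleton, Nat.cast_one] at hdeg
  have hsgn : (if Even L then (0:ℤ) else if Even a.val then 1 else -1) = 1 := by linarith
  by_cases hoL : Even L
  · rw [if_pos hoL] at hsgn; exact absurd hsgn (by norm_num)
  by_cases hea : Even a.val
  · exact ⟨a, L, hea, hoL, h1, hL, hZarc⟩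
  · rw [if_neg hoL, if_neg hea] at hsgn
    exact absurd hsgn (by norm_num)

end CircAux7


open CircAux CircAux2 CircAux3 CircAux4 CircAux5 CircAux6 CircAux7

/-- Corollary 4.4: on a circular curve with `γ = 2ℓ` components, all of positive genus, with
`d i = g i − 1` on odd-indexed components and `d i = g i + 1` on even-indexed components, the
number of admissible subsets (equivalently, of irreducible components of `W_d(C)`) is
`1 + ℓ²`. -/
theorem circular_even_count_components (γ : ℕ) [NeZero γ]
    (ℓ : ℕ) (hℓ : 2 ≤ ℓ) (hγ : γ = 2 * ℓ)
    (g : ZMod γ → ℕ) (hg : ∀ i, 1 ≤ g i)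
    (d : ZMod γ → ℤ)
    (hd : ∀ m : ℕ, 1 ≤ m → m ≤ 2 * ℓ →
      (Odd m → d ((m : ZMod γ)) = (g ((m : ZMod γ)) : ℤ) - 1) ∧
      (Even m → d ((m : ZMod γ)) = (g ((m : ZMod γ)) : ℤ) + 1)) :
    {Z : Finset (ZMod γ) | Admissible g d Z}.ncard = 1 + ℓ ^ 2 := by
  classical
  have h2 : 2 ∣ γ := ⟨ℓ, hγ⟩
  have hγ4 : 4 ≤ γ := by omega
  have hd' : ∀ i : ZMod γ, d i = (g i : ℤ) + (if Even i.val then 1 else -1) := by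
    intro i
    by_cases h0 : i.val = 0
    · have hi : i = 0 := by rwa [← ZMod.val_eq_zero]
      have hc : ((2 * ℓ : ℕ) : ZMod γ) = i := by
        rw [hi, ← hγ, ZMod.natCast_self]
      have key := (hd (2 * ℓ) (by omega) le_rfl).2 (even_two_mul ℓ)
      rw [hc] at key
      rw [key, if_pos (by rw [h0]; exact Even.zero)]
    · have h1 : 1 ≤ i.val := Nat.one_le_iff_ne_zero.2 h0
      have hlt : i.val ≤ 2 * ℓ := by
        have := ZMod.val_lt i
        omega
      have hc : ((i.val : ℕ) : ZMod γ) = i := ZMod.natCast_zmod_val i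
      by_cases hev : Even i.val
      · have key := (hd i.val h1 hlt).2 hev
        rw [hc] at key
        rw [key, if_pos hev]
      · have key := (hd i.val h1 hlt).1 (Nat.odd_iff.2 (Nat.not_even_iff.1 hev))
        rw [hc] at key
        rw [key, if_neg hev]
        ring
  set B : Finset (Finset (ZMod γ)) := (Finset.range ℓ ×ˢ Finset.range ℓ).image
      (fun p : ℕ × ℕ => arc (((2 * p.1 : ℕ) : ZMod γ)) (2 * p.2 + 1)) with hB
  have hmemB : ∀ Z : Finset (ZMod γ),
      Z ∈ B ↔ ∃ t, t < ℓ ∧ ∃ k, k < ℓ ∧ Z = arc (((2 * t : ℕ) : ZMod γ)) (2 * k + 1) := by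
    intro Z
    simp only [hB, Finset.mem_image, Finset.mem_product, Finset.mem_range, Prod.exists]
    constructor
    · rintro ⟨t, k, ⟨ht, hk⟩, rfl⟩
      exact ⟨t, ht, k, hk, rfl⟩
    · rintro ⟨t, ht, k, hk, rfl⟩
      exact ⟨t, k, ⟨ht, hk⟩, rfl⟩
  have hequiv : ∀ Z : Finset (ZMod γ),
      Admissible g d Z ↔ (Z = Finset.univ ∨ Z ∈ B) := by
    intro Z
    constructor
    · intro hA
      rcases admissible_shape h2 g d hd' hA with h | ⟨a, L, hea, hoL, h1, hL, rfl⟩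
      · exact Or.inl h
      · right
        rw [hmemB]
        obtain ⟨t, ht⟩ := hea
        obtain ⟨k, hk⟩ := Nat.not_even_iff_odd.1 hoL
        have hva := ZMod.val_lt a
        refine ⟨t, by omega, k, by omega, ?_⟩
        have hval : a = (((2 * t : ℕ)) : ZMod γ) := by
          rw [← ZMod.natCast_zmod_val a]
          congr 1
          omega
        rw [← hval, hk]
    · intro h
      rcases h with rfl | h
      · exact univ_admissible h2 g hg d hd'
      · rw [hmemB] at h
        obtain ⟨t, ht, k, hk, rfl⟩ := h
        apply arc_admissible h2 g hg d hd'
        · rw [ZMod.val_cast_of_lt (by omega)]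
          exact ⟨t, by omega⟩
        · simp [Nat.even_add_one, parity_simps]
        · omega
        · omega
  have hset : {Z : Finset (ZMod γ) | Admissible g d Z} = ↑(insert Finset.univ B) := by
    ext Z
    simp only [Set.mem_setOf_eq, Finset.coe_insert, Set.mem_insert_iff, Finset.mem_coe]
    exact hequiv Z
  rw [hset, Set.ncard_coe_finset]
  have hnotin : (Finset.univ : Finset (ZMod γ)) ∉ B := by
    intro h
    rw [hmemB] at h
    obtain ⟨t, ht, k, hk, hEq⟩ := h
    have := congrArg Finset.card hEq
    rw [Finset.card_univ, ZMod.card, card_arc (by omega)] at this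
    omega
  rw [Finset.card_insert_of_notMem hnotin]
  have hBcard : B.card = ℓ * ℓ := by
    rw [hB, Finset.card_image_of_injOn, Finset.card_product, Finset.card_range]
    intro p hp q hq hpq
    simp only [Finset.mem_coe, Finset.mem_product, Finset.mem_range] at hp hq
    simp only at hpq
    have hcard := congrArg Finset.card hpq
    rw [card_arc (by omega), card_arc (by omega)] at hcard
    have hk : p.2 = q.2 := by omega
    have hstart : ({(((2 * p.1 : ℕ)) : ZMod γ)} : Finset (ZMod γ)) =
        {(((2 * q.1 : ℕ)) : ZMod γ)} := by
      rw [← arc_filter_start (L := 2 * p.2 + 1) (by omega) (by omega),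
        ← arc_filter_start (L := 2 * q.2 + 1) (by omega) (by omega), hpq]
    have hae : (((2 * p.1 : ℕ)) : ZMod γ) = (((2 * q.1 : ℕ)) : ZMod γ) := by
      rwa [Finset.singleton_inj] at hstart
    have := congrArg ZMod.val hae
    rw [ZMod.val_cast_of_lt (by omega), ZMod.val_cast_of_lt (by omega)] at this
    have ht : p.1 = q.1 := by omega
    exact Prod.ext ht hk
  rw [hBcard]
  ring
end

section
/- Assume g_i ≥ 1 for all i ∈ ℤ/γℤ. Let ℓ ≥ 1 and let integers satisfy 1 = k_1 < j_1 < k_2 < j_2 < ⋯ < k_ℓ < j_ℓ ≤ γ. Define the multidegree d on C by d_i = g_i − 1 if i ≡ k_r (mod γ) for some r, d_i = g_i + 1 if i ≡ j_r (mod γ) for some r, and d_i = g_i otherwise, and set I^− := {i : d_i = g_i − 1} and I^+ := {i : d_i = g_i + 1}. Then a nonempty proper connected subset Z ⊆ ℤ/γℤ, written as a cyclic arc Z = {a, a+1, …, a+t} with a − 1 ∉ Z, is admissible if and only if Z ∩ (I^+ ∪ I^−) ≠ ∅ and both the first and the last elements of Z ∩ (I^+ ∪ I^−) in the linear order a, a+1,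 …, a+t belong to I^+. (The characterization of admissible proper subcurves established in the proof of Proposition 4.3 of the paper.) -/
open Finset

open scoped Classical



def repZ (γ : ℕ) [NeZero γ] (i : ZMod γ) : ℕ := if i.val = 0 then γ else i.val

lemma repZ_pos (γ : ℕ) [NeZero γ] (i : ZMod γ) : 1 ≤ repZ γ i := by
  unfold repZ; split
  · exact Nat.one_le_iff_ne_zero.mpr (NeZero.ne γ)
  · omega

lemma repZ_le (γ : ℕ) [NeZero γ] (i : ZMod γ) : repZ γ i ≤ γ := by
  unfold repZ; split
  · exact le_rfl
  · exact (ZMod.val_lt i).le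

lemma repZ_cast (γ : ℕ) [NeZero γ] (i : ZMod γ) : ((repZ γ i : ℕ) : ZMod γ) = i := by
  unfold repZ
  by_cases h : i.val = 0
  · rw [if_pos h, ZMod.natCast_self]
    exact ((ZMod.val_eq_zero i).mp h).symm
  · rw [if_neg h]
    exact ZMod.natCast_rightInverse i

lemma repZ_natCast (γ : ℕ) [NeZero γ] (x : ℕ) (h1 : 1 ≤ x) (h2 : x ≤ γ) :
    repZ γ ((x : ℕ) : ZMod γ) = x := by
  rcases eq_or_lt_of_le h2 with h | h
  · subst h
    unfold repZ
    rw [ZMod.natCast_self]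
    simp
  · unfold repZ
    rw [ZMod.val_cast_of_lt h, if_neg (by omega)]

lemma repZ_inj (γ : ℕ) [NeZero γ] (x y : ℕ) (hx1 : 1 ≤ x) (hx2 : x ≤ γ)
    (hy1 : 1 ≤ y) (hy2 : y ≤ γ) (h : ((x : ℕ) : ZMod γ) = ((y : ℕ) : ZMod γ)) : x = y := by
  rw [← repZ_natCast γ x hx1 hx2, ← repZ_natCast γ y hy1 hy2, h]

def fpm (ℓ : ℕ) (k j : ℕ → ℕ) (x : ℕ) : ℤ :=
  ((((Finset.Icc 1 ℓ).filter (fun r => j r ≤ x)).card : ℤ)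
   - (((Finset.Icc 1 ℓ).filter (fun r => k r ≤ x)).card : ℤ))

lemma card_filter_step (ℓ : ℕ) (j : ℕ → ℕ)
    (hinj : ∀ r r', r ∈ Finset.Icc 1 ℓ → r' ∈ Finset.Icc 1 ℓ → j r = j r' → r = r')
    (x : ℕ) (hx : 1 ≤ x) :
    (((Finset.Icc 1 ℓ).filter (fun r => j r ≤ x)).card : ℤ)
    = (((Finset.Icc 1 ℓ).filter (fun r => j r ≤ x - 1)).card : ℤ)
      + (if ∃ r, 1 ≤ r ∧ r ≤ ℓ ∧ j r = x then 1 else 0) := by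
  classical
  have hsplit : (Finset.Icc 1 ℓ).filter (fun r => j r ≤ x)
      = ((Finset.Icc 1 ℓ).filter (fun r => j r ≤ x - 1))
        ∪ ((Finset.Icc 1 ℓ).filter (fun r => j r = x)) := by
    ext r
    simp only [mem_filter, mem_union, mem_Icc]
    omega
  have hdisj : Disjoint ((Finset.Icc 1 ℓ).filter (fun r => j r ≤ x - 1))
      ((Finset.Icc 1 ℓ).filter (fun r => j r = x)) := by
    rw [Finset.disjoint_left]
    intro r hr hr'
    simp only [mem_filter] at hr hr'
    omega
  have hcard : ((Finset.Icc 1 ℓ).filter (fun r => j r = x)).card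
      = if ∃ r, 1 ≤ r ∧ r ≤ ℓ ∧ j r = x then 1 else 0 := by
    by_cases hex : ∃ r, 1 ≤ r ∧ r ≤ ℓ ∧ j r = x
    · rw [if_pos hex]
      obtain ⟨r₀, hr₀1, hr₀2, hr₀3⟩ := hex
      have : (Finset.Icc 1 ℓ).filter (fun r => j r = x) = {r₀} := by
        ext r
        simp only [mem_filter, mem_Icc, mem_singleton]
        constructor
        · rintro ⟨⟨h1, h2⟩, h3⟩
          exact hinj r r₀ (by simp [mem_Icc]; omega) (by simp [mem_Icc]; omega) (by omega)
        · rintro rfl; exact ⟨⟨hr₀1, hr₀2⟩, hr₀3⟩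
      rw [this, card_singleton]
    · rw [if_neg hex]
      rw [Finset.card_eq_zero, Finset.filter_eq_empty_iff]
      intro r hr
      simp only [mem_Icc] at hr
      intro h
      exact hex ⟨r, hr.1, hr.2, h⟩
  rw [hsplit, Finset.card_union_of_disjoint hdisj, hcard]
  push_cast
  ring

lemma chainLem (ℓ : ℕ) (k j : ℕ → ℕ) (hkj : ∀ r, 1 ≤ r → r ≤ ℓ → k r < j r)
    (hjk : ∀ r, 1 ≤ r → r < ℓ → j r < k (r + 1)) :
    ∀ r r', 1 ≤ r → r ≤ r' → r' ≤ ℓ →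
      k r ≤ k r' ∧ j r ≤ j r' ∧ (r < r' → j r < k r') := by
  intro r r' hr hrr'
  induction r' , hrr' using Nat.le_induction with
  | base => intro _; exact ⟨le_rfl, le_rfl, by omega⟩
  | succ r' hrr' ih =>
    intro hr'ℓ
    have ih' := ih (by omega)
    have h2 : j r' < k (r' + 1) := hjk r' (by omega) (by omega)
    have h3 : k (r' + 1) < j (r' + 1) := hkj (r' + 1) (by omega) (by omega)
    have h4 : k r' < j r' := hkj r' (by omega) (by omega)
    exact ⟨by omega, by omega, fun _ => by omega⟩

section FPM
variable (γ ℓ : ℕ) (k j : ℕ → ℕ) (hℓ : 1 ≤ ℓ) (hk1 : k 1 = 1)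
  (hkj : ∀ r, 1 ≤ r → r ≤ ℓ → k r < j r)
  (hjk : ∀ r, 1 ≤ r → r < ℓ → j r < k (r + 1))
  (hjγ : j ℓ ≤ γ)

include hℓ hk1 hkj hjk hjγ

lemma kj_facts : ∀ r, 1 ≤ r → r ≤ ℓ →
    1 ≤ k r ∧ k r < j r ∧ j r ≤ γ := by
  intro r h1 h2
  have c1 := chainLem ℓ k j hkj hjk 1 r le_rfl h1 h2
  have c2 := chainLem ℓ k j hkj hjk r ℓ h1 h2 le_rfl
  exact ⟨by omega, hkj r h1 h2, by omega⟩

lemma fpm_zero : fpm ℓ k j 0 = 0 := by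
  unfold fpm
  have h1 : (Finset.Icc 1 ℓ).filter (fun r => j r ≤ 0) = ∅ := by
    rw [Finset.filter_eq_empty_iff]
    intro r hr
    simp only [mem_Icc] at hr
    have := kj_facts γ ℓ k j hℓ hk1 hkj hjk hjγ r hr.1 hr.2
    omega
  have h2 : (Finset.Icc 1 ℓ).filter (fun r => k r ≤ 0) = ∅ := by
    rw [Finset.filter_eq_empty_iff]
    intro r hr
    simp only [mem_Icc] at hr
    have := kj_facts γ ℓ k j hℓ hk1 hkj hjk hjγ r hr.1 hr.2
    omega
  rw [h1, h2]
  simp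

lemma fpm_gamma : fpm ℓ k j γ = 0 := by
  unfold fpm
  have h1 : (Finset.Icc 1 ℓ).filter (fun r => j r ≤ γ) = Finset.Icc 1 ℓ := by
    rw [Finset.filter_eq_self]
    intro r hr
    simp only [mem_Icc] at hr
    have := kj_facts γ ℓ k j hℓ hk1 hkj hjk hjγ r hr.1 hr.2
    omega
  have h2 : (Finset.Icc 1 ℓ).filter (fun r => k r ≤ γ) = Finset.Icc 1 ℓ := by
    rw [Finset.filter_eq_self]
    intro r hr
    simp only [mem_Icc] at hr
    have := kj_facts γ ℓ k j hℓ hk1 hkj hjk hjγ r hr.1 hr.2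
    omega
  rw [h1, h2]
  ring

lemma fpm_bounds (x : ℕ) : -1 ≤ fpm ℓ k j x ∧ fpm ℓ k j x ≤ 0 := by
  unfold fpm
  constructor
  · have hsub : (Finset.Icc 1 ℓ).filter (fun r => k r ≤ x)
        ⊆ ((Finset.Icc 1 ℓ).filter (fun r => j r ≤ x))
          ∪ (((Finset.Icc 1 ℓ).filter (fun r => k r ≤ x)) \
              ((Finset.Icc 1 ℓ).filter (fun r => j r ≤ x))) := by
      intro r hr
      by_cases h : r ∈ (Finset.Icc 1 ℓ).filter (fun r => j r ≤ x)
      · exact Finset.mem_union_left _ h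
      · exact Finset.mem_union_right _ (Finset.mem_sdiff.mpr ⟨hr, h⟩)
    have hone : (((Finset.Icc 1 ℓ).filter (fun r => k r ≤ x)) \
        ((Finset.Icc 1 ℓ).filter (fun r => j r ≤ x))).card ≤ 1 := by
      rw [Finset.card_le_one]
      intro r hr r' hr'
      simp only [Finset.mem_sdiff, mem_filter, mem_Icc, not_and, not_le] at hr hr'
      by_contra hne
      rcases Nat.lt_or_ge r r' with h | h
      · have := chainLem ℓ k j hkj hjk r r' hr.1.1.1 h.le hr'.1.1.2
        have hx1 := hr.2 hr.1.1
        omega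
      · have hlt : r' < r := by omega
        have := chainLem ℓ k j hkj hjk r' r hr'.1.1.1 hlt.le hr.1.1.2
        have hx1 := hr'.2 hr'.1.1
        omega
    have := (Finset.card_le_card hsub).trans (Finset.card_union_le _ _)
    have h2 := hone
    push_cast
    omega
  · have hsub : (Finset.Icc 1 ℓ).filter (fun r => j r ≤ x)
        ⊆ (Finset.Icc 1 ℓ).filter (fun r => k r ≤ x) := by
      intro r hr
      simp only [mem_filter, mem_Icc] at hr ⊢
      have := hkj r hr.1.1 hr.1.2
      omega
    have := Finset.card_le_card hsub
    push_cast
    omega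

end FPM

section Wrap
variable (γ ℓ : ℕ) [NeZero γ] (k j : ℕ → ℕ) (hℓ : 1 ≤ ℓ) (hk1 : k 1 = 1)
  (hkj : ∀ r, 1 ≤ r → r ≤ ℓ → k r < j r)
  (hjk : ∀ r, 1 ≤ r → r < ℓ → j r < k (r + 1))
  (hjγ : j ℓ ≤ γ)

include hℓ hk1 hkj hjk hjγ

lemma wrapStep (i : ZMod γ) :
    fpm ℓ k j (repZ γ (i + 1) - 1) = fpm ℓ k j (repZ γ i) := by
  have hval : i.val < γ := ZMod.val_lt i
  have h1 : i + 1 = ((i.val + 1 : ℕ) : ZMod γ) := by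
    rw [Nat.cast_add, Nat.cast_one, (ZMod.natCast_rightInverse i : ((i.val : ℕ) : ZMod γ) = i)]
  have h2 : repZ γ (i + 1) = i.val + 1 := by
    rw [h1]; exact repZ_natCast γ (i.val + 1) (by omega) (by omega)
  rw [h2]
  simp only [Nat.add_sub_cancel]
  unfold repZ
  by_cases h : i.val = 0
  · rw [if_pos h, h, fpm_zero γ ℓ k j hℓ hk1 hkj hjk hjγ,
      fpm_gamma γ ℓ k j hℓ hk1 hkj hjk hjγ]
  · rw [if_neg h]

lemma stepLem (g : ZMod γ → ℕ) (d : ZMod γ → ℤ)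
    (hdk : ∀ r, 1 ≤ r → r ≤ ℓ → d ((k r : ZMod γ)) = (g ((k r : ZMod γ)) : ℤ) - 1)
    (hdj : ∀ r, 1 ≤ r → r ≤ ℓ → d ((j r : ZMod γ)) = (g ((j r : ZMod γ)) : ℤ) + 1)
    (hdo : ∀ i : ZMod γ, (¬ ∃ r, 1 ≤ r ∧ r ≤ ℓ ∧ i = (k r : ZMod γ)) →
      (¬ ∃ r, 1 ≤ r ∧ r ≤ ℓ ∧ i = (j r : ZMod γ)) → d i = (g i : ℤ))
    (i : ZMod γ) :
    d i - g i = fpm ℓ k j (repZ γ i) - fpm ℓ k j (repZ γ i - 1) := by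
  have hx1 : 1 ≤ repZ γ i := repZ_pos γ i
  have hx2 : repZ γ i ≤ γ := repZ_le γ i
  have hxi : ((repZ γ i : ℕ) : ZMod γ) = i := repZ_cast γ i
  have hfacts := kj_facts γ ℓ k j hℓ hk1 hkj hjk hjγ
  have hjinj : ∀ r r', r ∈ Finset.Icc 1 ℓ → r' ∈ Finset.Icc 1 ℓ → j r = j r' → r = r' := by
    intro r r' hr hr' h
    simp only [mem_Icc] at hr hr'
    by_contra hne
    rcases Nat.lt_or_ge r r' with hlt | hge
    · have := chainLem ℓ k j hkj hjk r r' hr.1 hlt.le hr'.2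
      have := hkj r' hr'.1 hr'.2
      omega
    · have hlt : r' < r := by omega
      have := chainLem ℓ k j hkj hjk r' r hr'.1 hlt.le hr.2
      have := hkj r hr.1 hr.2
      omega
  have hkinj : ∀ r r', r ∈ Finset.Icc 1 ℓ → r' ∈ Finset.Icc 1 ℓ → k r = k r' → r = r' := by
    intro r r' hr hr' h
    simp only [mem_Icc] at hr hr'
    by_contra hne
    rcases Nat.lt_or_ge r r' with hlt | hge
    · have := chainLem ℓ k j hkj hjk r r' hr.1 hlt.le hr'.2
      have := hkj r hr.1 hr.2
      omega
    · have hlt : r' < r := by omega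
      have := chainLem ℓ k j hkj hjk r' r hr'.1 hlt.le hr.2
      have := hkj r' hr'.1 hr'.2
      omega
  have hkjne : ∀ r r', 1 ≤ r → r ≤ ℓ → 1 ≤ r' → r' ≤ ℓ → k r ≠ j r' := by
    intro r r' h1 h2 h1' h2'
    rcases lt_trichotomy r r' with hlt | heq | hgt
    · have := chainLem ℓ k j hkj hjk r r' h1 hlt.le h2'
      have := hkj r h1 h2
      omega
    · subst heq; have := hkj r h1 h2; omega
    · have := chainLem ℓ k j hkj hjk r' r h1' hgt.le h2
      have h3 := (this.2.2 hgt)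
      have := hkj r h1 h2
      omega
  have hstepj := card_filter_step ℓ j hjinj (repZ γ i) hx1
  have hstepk := card_filter_step ℓ k hkinj (repZ γ i) hx1
  unfold fpm
  by_cases hj : ∃ r, 1 ≤ r ∧ r ≤ ℓ ∧ j r = repZ γ i
  · obtain ⟨r, h1, h2, h3⟩ := hj
    have hieq : ((j r : ℕ) : ZMod γ) = i := by rw [h3, hxi]
    have hd : d i = (g i : ℤ) + 1 := by rw [← hieq]; exact hdj r h1 h2
    have hk' : ¬ ∃ r', 1 ≤ r' ∧ r' ≤ ℓ ∧ k r' = repZ γ i := by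
      rintro ⟨r', h1', h2', h3'⟩
      exact hkjne r' r h1' h2' h1 h2 (by omega)
    rw [hstepj, hstepk, if_pos ⟨r, h1, h2, h3⟩, if_neg hk', hd]
    ring
  · by_cases hk : ∃ r, 1 ≤ r ∧ r ≤ ℓ ∧ k r = repZ γ i
    · obtain ⟨r, h1, h2, h3⟩ := hk
      have hieq : ((k r : ℕ) : ZMod γ) = i := by rw [h3, hxi]
      have hd : d i = (g i : ℤ) - 1 := by rw [← hieq]; exact hdk r h1 h2
      rw [hstepj, hstepk, if_neg hj, if_pos ⟨r, h1, h2, h3⟩, hd]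
      ring
    · have hd : d i = (g i : ℤ) := by
        apply hdo i
        · rintro ⟨r, h1, h2, h3⟩
          apply hk
          refine ⟨r, h1, h2, ?_⟩
          have hb := hfacts r h1 h2
          rw [h3, repZ_natCast γ (k r) (by omega) (by omega)]
        · rintro ⟨r, h1, h2, h3⟩
          apply hj
          refine ⟨r, h1, h2, ?_⟩
          have hb := hfacts r h1 h2
          rw [h3, repZ_natCast γ (j r) (by omega) (by omega)]
      rw [hstepj, hstepk, if_neg hj, if_neg hk, hd]
      ring
end Wrap



lemma KI (B : ℕ → ℤ) (t : ℕ) (hB0 : ∀ s ≤ t, 0 ≤ B s) (hB1 : ∀ s ≤ t, B s ≤ 1)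
    (hBt : B t = 1) (T : Finset ℕ) (hT : T ⊆ Finset.range (t+1)) :
    ((if 0 ∈ T then 1 else 0) + (if t ∈ T then 1 else 0) : ℤ)
      - ((T.filter (fun s => s = 0 ∨ s - 1 ∉ T)).card : ℤ)
      ≤ ∑ s ∈ T, (B s - if s = 0 then 0 else B (s-1)) := by
  classical
  have hmem : ∀ s ∈ T, s ≤ t := fun s hs => by
    have := hT hs; simp only [mem_range] at this; omega
  have hsplit : ∑ s ∈ T, (B s - if s = 0 then 0 else B (s-1))
      = ∑ s ∈ T, B s - ∑ s ∈ T, (if s = 0 then 0 else B (s-1)) :=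
    Finset.sum_sub_distrib _ _
  -- split B-sum into ends/non-ends
  have hBsum : ∑ s ∈ T, B s
      = ∑ s ∈ T.filter (fun s => s + 1 ∈ T), B s
        + ∑ s ∈ T.filter (fun s => s + 1 ∉ T), B s :=
    (Finset.sum_filter_add_sum_filter_not T _ _).symm
  have hPsum : ∑ s ∈ T, (if s = 0 then 0 else B (s-1))
      = ∑ s ∈ T.filter (fun s => ¬ (s = 0 ∨ s - 1 ∉ T)), (if s = 0 then 0 else B (s-1))
        + ∑ s ∈ T.filter (fun s => s = 0 ∨ s - 1 ∉ T), (if s = 0 then 0 else B (s-1)) := by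
    rw [Finset.sum_filter_not_add_sum_filter T _ _] -- maybe name differs
  have hbij : ∑ s ∈ T.filter (fun s => ¬ (s = 0 ∨ s - 1 ∉ T)), (if s = 0 then 0 else B (s-1))
      = ∑ u ∈ T.filter (fun u => u + 1 ∈ T), B u := by
    refine Finset.sum_nbij' (fun s => s - 1) (fun u => u + 1) ?_ ?_ ?_ ?_ ?_
    · intro s hs
      simp only [mem_filter, not_or, not_not] at hs ⊢
      exact ⟨hs.2.2, by rw [Nat.sub_add_cancel (by omega)]; exact hs.1⟩
    · intro u hu
      simp only [mem_filter, not_or, not_not] at hu ⊢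
      refine ⟨hu.2, by omega, by simpa using hu.1⟩
    · intro s hs
      simp only [mem_filter, not_or, not_not] at hs
      omega
    · intro u hu; omega
    · intro s hs
      simp only [mem_filter, not_or, not_not] at hs
      rw [if_neg hs.2.1]
  have hends : (if t ∈ T then (1:ℤ) else 0) ≤ ∑ s ∈ T.filter (fun s => s + 1 ∉ T), B s := by
    by_cases ht : t ∈ T
    · rw [if_pos ht]
      have htm : t ∈ T.filter (fun s => s + 1 ∉ T) := by
        simp only [mem_filter]
        exact ⟨ht, fun h => by have := hmem _ h; omega⟩
      calc (1:ℤ) = B t := hBt.symm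
        _ ≤ _ := Finset.single_le_sum (fun s hs => hB0 s (hmem s (mem_filter.mp hs).1)) htm
    · rw [if_neg ht]
      exact Finset.sum_nonneg (fun s hs => hB0 s (hmem s (mem_filter.mp hs).1))
  have hstarts : ∑ s ∈ T.filter (fun s => s = 0 ∨ s - 1 ∉ T), (if s = 0 then 0 else B (s-1))
      ≤ ((T.filter (fun s => s = 0 ∨ s - 1 ∉ T)).card : ℤ) - (if 0 ∈ T then 1 else 0) := by
    have h1 : ∑ s ∈ T.filter (fun s => s = 0 ∨ s - 1 ∉ T), (if s = 0 then 0 else B (s-1))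
        ≤ ∑ s ∈ T.filter (fun s => s = 0 ∨ s - 1 ∉ T), (if s = 0 then 0 else 1) := by
      refine Finset.sum_le_sum (fun s hs => ?_)
      by_cases h0 : s = 0
      · simp [h0]
      · rw [if_neg h0, if_neg h0]
        exact hB1 (s-1) (by have := hmem s (mem_filter.mp hs).1; omega)
    have h2 : ∑ s ∈ T.filter (fun s => s = 0 ∨ s - 1 ∉ T), (if s = 0 then (0:ℤ) else 1)
        = ((T.filter (fun s => s = 0 ∨ s - 1 ∉ T)).card : ℤ) - (if 0 ∈ T then 1 else 0) := by
      have : ∀ s : ℕ, (if s = 0 then (0:ℤ) else 1) = 1 - (if s = 0 then 1 else 0) := by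
        intro s; by_cases h : s = 0 <;> simp [h]
      rw [Finset.sum_congr rfl (fun s _ => this s), Finset.sum_sub_distrib,
        Finset.sum_const, nsmul_eq_mul, mul_one]
      congr 1
      have : ∑ s ∈ T.filter (fun s => s = 0 ∨ s - 1 ∉ T), (if s = 0 then (1:ℤ) else 0)
          = if 0 ∈ T.filter (fun s => s = 0 ∨ s - 1 ∉ T) then 1 else 0 := by
        rw [Finset.sum_ite_eq' (T.filter (fun s => s = 0 ∨ s - 1 ∉ T)) 0 (fun _ => (1:ℤ))]
      rw [this]
      congr 1
      simp only [mem_filter, eq_iff_iff]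
      tauto
    linarith
  rw [hsplit, hBsum, hPsum, hbij]
  linarith

lemma filter_range_start (n : ℕ) :
    (Finset.range (n+1)).filter (fun s => s = 0 ∨ s - 1 ∉ Finset.range (n+1)) = {0} := by
  ext s; simp only [Finset.mem_filter, Finset.mem_range, Finset.mem_singleton]; omega

lemma filter_Icc_start (p q : ℕ) (hp : 1 ≤ p) (hpq : p ≤ q) :
    (Finset.Icc p q).filter (fun s => s = 0 ∨ s - 1 ∉ Finset.Icc p q) = {p} := by
  ext s; simp only [Finset.mem_filter, Finset.mem_Icc, Finset.mem_singleton]; omega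


/-- The characterization of admissible proper subcurves established in the proof of
Proposition 4.3: a nonempty proper cyclic arc `Z = {a, a+1, …, a+t}` (with `a − 1 ∉ Z`) is
admissible if and only if `Z` meets `I⁺ ∪ I⁻` and both the first and the last elements of
`Z ∩ (I⁺ ∪ I⁻)` in the linear order `a, a+1, …, a+t` belong to `I⁺`. -/
theorem circular_admissible_arc_iff (γ : ℕ) [NeZero γ] (hγ : 3 ≤ γ)
    (g : ZMod γ → ℕ) (hg : ∀ i, 1 ≤ g i)
    (ℓ : ℕ) (hℓ : 1 ≤ ℓ) (k j : ℕ → ℕ)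
    (hk1 : k 1 = 1)
    (hkj : ∀ r, 1 ≤ r → r ≤ ℓ → k r < j r)
    (hjk : ∀ r, 1 ≤ r → r < ℓ → j r < k (r + 1))
    (hjγ : j ℓ ≤ γ)
    (d : ZMod γ → ℤ)
    (hdk : ∀ r, 1 ≤ r → r ≤ ℓ → d ((k r : ZMod γ)) = (g ((k r : ZMod γ)) : ℤ) - 1)
    (hdj : ∀ r, 1 ≤ r → r ≤ ℓ → d ((j r : ZMod γ)) = (g ((j r : ZMod γ)) : ℤ) + 1)
    (hdo : ∀ i : ZMod γ, (¬ ∃ r, 1 ≤ r ∧ r ≤ ℓ ∧ i = (k r : ZMod γ)) →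
      (¬ ∃ r, 1 ≤ r ∧ r ≤ ℓ ∧ i = (j r : ZMod γ)) → d i = (g i : ℤ))
    (a : ZMod γ) (t : ℕ)
    (Z : Finset (ZMod γ))
    (hZ : Z = (Finset.range (t + 1)).image (fun s : ℕ => a + (s : ZMod γ)))
    (ha : a - 1 ∉ Z) :
    Admissible g d Z ↔
      ∃ s₁ s₂ : ℕ, s₁ ≤ t ∧ s₂ ≤ t ∧
        d (a + (s₁ : ZMod γ)) = (g (a + (s₁ : ZMod γ)) : ℤ) + 1 ∧
        d (a + (s₂ : ZMod γ)) = (g (a + (s₂ : ZMod γ)) : ℤ) + 1 ∧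
        ∀ s : ℕ, s ≤ t →
          (d (a + (s : ZMod γ)) = (g (a + (s : ZMod γ)) : ℤ) + 1 ∨
            d (a + (s : ZMod γ)) = (g (a + (s : ZMod γ)) : ℤ) - 1) →
          s₁ ≤ s ∧ s ≤ s₂ := by
  classical
  have htγ : t + 1 < γ := by
    by_contra hcon
    push_neg at hcon
    apply ha
    rw [hZ]
    refine mem_image.mpr ⟨γ - 1, mem_range.mpr (by omega), ?_⟩
    have hc : ((γ - 1 : ℕ) : ZMod γ) = -1 := by
      rw [Nat.cast_sub (by omega : 1 ≤ γ), Nat.cast_one, ZMod.natCast_self]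
      ring
    rw [hc]
    ring
  have hinj : ∀ s s' : ℕ, s < γ → s' < γ →
      a + (s : ZMod γ) = a + (s' : ZMod γ) → s = s' := by
    intro s s' hs hs' h
    have h2 : (s : ZMod γ) = (s' : ZMod γ) := add_left_cancel h
    have h3 := congrArg ZMod.val h2
    rwa [ZMod.val_cast_of_lt hs, ZMod.val_cast_of_lt hs'] at h3
  have hmemZ : ∀ i : ZMod γ, i ∈ Z ↔ ∃ s, s ≤ t ∧ a + (s : ZMod γ) = i := by
    intro i
    constructor
    · intro hi
      rw [hZ] at hi
      obtain ⟨s, hs, he⟩ := mem_image.mp hi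
      exact ⟨s, by have := mem_range.mp hs; omega, he⟩
    · rintro ⟨s, hs, he⟩
      rw [hZ]
      exact mem_image.mpr ⟨s, mem_range.mpr (by omega), he⟩
  have hφZ : ∀ s : ℕ, s ≤ t → a + (s : ZMod γ) ∈ Z :=
    fun s hs => (hmemZ _).mpr ⟨s, hs, rfl⟩
  have hφZ' : ∀ s : ℕ, s < γ → a + (s : ZMod γ) ∈ Z → s ≤ t := by
    intro s hs hmem
    obtain ⟨s', hs', he⟩ := (hmemZ _).mp hmem
    rwa [← hinj s' s (by omega) hs he]
  have hsub1 : ∀ s : ℕ, 1 ≤ s → a + (s : ZMod γ) - 1 = a + ((s - 1 : ℕ) : ZMod γ) := by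
    intro s hs
    rw [Nat.cast_sub hs]
    push_cast
    ring
  have haddt : ∀ s : ℕ, a + (s : ZMod γ) + 1 = a + ((s + 1 : ℕ) : ZMod γ) := by
    intro s; push_cast; ring
  have hm1 : ∀ s : ℕ, s ≤ t → ((a + (s : ZMod γ) - 1 ∈ Z) ↔ s ≠ 0) := by
    intro s hs
    constructor
    · intro h h0
      subst h0
      simp only [Nat.cast_zero, add_zero] at h
      exact ha h
    · intro h0
      rw [hsub1 s (by omega)]
      exact hφZ _ (by omega)
  have hp1 : ∀ s : ℕ, s ≤ t → ((a + (s : ZMod γ) + 1 ∈ Z) ↔ s ≠ t) := by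
    intro s hs
    constructor
    · intro h hst
      subst hst
      rw [haddt] at h
      have := hφZ' (s + 1) (by omega) h
      omega
    · intro h
      rw [haddt]
      exact hφZ _ (by omega)
  have heM : ∀ s : ℕ, s ≤ t → eMult d Z (a + (s : ZMod γ))
      = d (a + (s : ZMod γ)) - (if s = 0 then 1 else 0) - (if s = t then 1 else 0) := by
    intro s hs
    unfold eMult
    congr 1
    · congr 1
      by_cases h0 : s = 0
      · rw [if_neg (fun hc => ((hm1 s hs).mp hc) h0), if_pos h0]
      · rw [if_pos ((hm1 s hs).mpr h0), if_neg h0]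
    · by_cases h0 : s = t
      · rw [if_neg (fun hc => ((hp1 s hs).mp hc) h0), if_pos h0]
      · rw [if_pos ((hp1 s hs).mpr h0), if_neg h0]
  have hZuniv : Z ≠ Finset.univ := fun h => ha (h ▸ mem_univ _)
  have hTinj : ∀ T : Finset ℕ, T ⊆ Finset.range (t + 1) →
      ∀ x ∈ T, ∀ y ∈ T, a + (x : ZMod γ) = a + (y : ZMod γ) → x = y := by
    intro T hT x hx y hy h
    have hx' := mem_range.mp (hT hx)
    have hy' := mem_range.mp (hT hy)
    exact hinj x y (by omega) (by omega) h
  have hsumF : ∀ (T : Finset ℕ), T ⊆ Finset.range (t + 1) → ∀ F : ZMod γ → ℤ,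
      ∑ i ∈ T.image (fun s : ℕ => a + (s : ZMod γ)), F i
        = ∑ s ∈ T, F (a + (s : ZMod γ)) := by
    intro T hT F
    exact Finset.sum_image (hTinj T hT)
  have hnC : ∀ T : Finset ℕ, T ⊆ Finset.range (t + 1) →
      nCirc (T.image (fun s : ℕ => a + (s : ZMod γ)))
        = (T.filter (fun s => s = 0 ∨ s - 1 ∉ T)).card := by
    intro T hT
    have hmemT : ∀ s ∈ T, s ≤ t := fun s hs => by have := mem_range.mp (hT hs); omega
    unfold nCirc
    have hset : (T.image (fun s : ℕ => a + (s : ZMod γ))).filter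
        (fun i => i - 1 ∉ T.image (fun s : ℕ => a + (s : ZMod γ)))
        = (T.filter (fun s => s = 0 ∨ s - 1 ∉ T)).image (fun s : ℕ => a + (s : ZMod γ)) := by
      ext i
      simp only [mem_filter, mem_image]
      constructor
      · rintro ⟨⟨s, hsT, rfl⟩, hnot⟩
        refine ⟨s, ⟨hsT, ?_⟩, rfl⟩
        by_cases h0 : s = 0
        · exact Or.inl h0
        · refine Or.inr (fun hsm => hnot ?_)
          exact ⟨s - 1, hsm, (hsub1 s (by omega)).symm⟩
      · rintro ⟨s, ⟨hsT, hor⟩, rfl⟩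
        refine ⟨⟨s, hsT, rfl⟩, ?_⟩
        rintro ⟨s'', hs''T, heq⟩
        rcases hor with h0 | hsm
        · subst h0
          apply ha
          have h1 : a + ((0 : ℕ) : ZMod γ) - 1 = a - 1 := by simp
          rw [h1] at heq
          rw [hmemZ]
          exact ⟨s'', hmemT _ hs''T, heq⟩
        · have hs0 : s ≠ 0 := by
            rintro rfl
            simp only [Nat.zero_sub] at hsm
            exact hsm hsT
          rw [hsub1 s (by omega)] at heq
          have he2 := hinj s'' (s - 1)
            (by have := hmemT _ hs''T; omega) (by have := hmemT _ hsT; omega) heq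
          exact hsm (he2 ▸ hs''T)
    rw [hset]
    apply Finset.card_image_of_injOn
    intro x hx y hy h
    simp only [Finset.coe_filter, Set.mem_setOf_eq] at hx hy
    exact hTinj T hT x hx.1 y hy.1 h
  have hYrep : ∀ Y : Finset (ZMod γ), Y ⊆ Z →
      Y = ((Finset.range (t + 1)).filter
          (fun s : ℕ => a + (s : ZMod γ) ∈ Y)).image (fun s : ℕ => a + (s : ZMod γ)) := by
    intro Y hY
    ext i
    simp only [mem_image, mem_filter, mem_range, Nat.lt_succ_iff]
    constructor
    · intro hi
      obtain ⟨s, hs, he⟩ := (hmemZ i).mp (hY hi)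
      exact ⟨s, ⟨hs, he ▸ hi⟩, he⟩
    · rintro ⟨s, ⟨_, hsY⟩, rfl⟩
      exact hsY
  have hE3 : ∀ i : ZMod γ, d i = (g i : ℤ) + 1 ∨ d i = (g i : ℤ) ∨ d i = (g i : ℤ) - 1 := by
    intro i
    by_cases hje : ∃ r, 1 ≤ r ∧ r ≤ ℓ ∧ i = ((j r : ℕ) : ZMod γ)
    · obtain ⟨r, h1, h2, h3⟩ := hje
      left; rw [h3]; exact hdj r h1 h2
    · by_cases hke : ∃ r, 1 ≤ r ∧ r ≤ ℓ ∧ i = ((k r : ℕ) : ZMod γ)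
      · obtain ⟨r, h1, h2, h3⟩ := hke
        right; right; rw [h3]; exact hdk r h1 h2
      · right; left; exact hdo i hke hje
  have hsum_e : ∀ T : Finset ℕ, T ⊆ Finset.range (t + 1) →
      ∑ i ∈ T.image (fun s : ℕ => a + (s : ZMod γ)), eMult d Z i
      = ∑ s ∈ T, d (a + (s : ZMod γ))
        - (if 0 ∈ T then 1 else 0) - (if t ∈ T then 1 else 0) := by
    intro T hT
    rw [hsumF T hT]
    have hcong : ∀ s ∈ T, eMult d Z (a + (s : ZMod γ))
        = d (a + (s : ZMod γ)) - (if s = 0 then (1:ℤ) else 0) - (if s = t then 1 else 0) :=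
      fun s hs => heM s (by have := mem_range.mp (hT hs); omega)
    have i0 : ∑ s ∈ T, (if s = 0 then (1:ℤ) else 0) = (if 0 ∈ T then 1 else 0) :=
      Finset.sum_ite_eq' T 0 (fun _ => (1:ℤ))
    have it : ∑ s ∈ T, (if s = t then (1:ℤ) else 0) = (if t ∈ T then 1 else 0) :=
      Finset.sum_ite_eq' T t (fun _ => (1:ℤ))
    rw [Finset.sum_congr rfl hcong, Finset.sum_sub_distrib, Finset.sum_sub_distrib, i0, it]
  set E : ℕ → ℤ := fun s => d (a + (s : ZMod γ)) - (g (a + (s : ZMod γ)) : ℤ) with hE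
  set B : ℕ → ℤ := fun s => ∑ u ∈ Finset.range (s + 1), E u with hB
  have hB0 : B 0 = E 0 := by
    simp only [hB]
    rw [zero_add, Finset.sum_range_one]
  have hBsucc : ∀ s : ℕ, B (s + 1) = B s + E (s + 1) := by
    intro s
    simp only [hB]
    exact Finset.sum_range_succ E (s + 1)
  have hEtri : ∀ s : ℕ, E s = 1 ∨ E s = 0 ∨ E s = -1 := by
    intro s
    have := hE3 (a + (s : ZMod γ))
    simp only [hE]
    omega
  have hsplitd : ∀ T : Finset ℕ, ∑ s ∈ T, d (a + (s : ZMod γ))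
      = ∑ s ∈ T, (g (a + (s : ZMod γ)) : ℤ) + ∑ s ∈ T, E s := by
    intro T
    rw [← Finset.sum_add_distrib]
    apply Finset.sum_congr rfl
    intro u _
    simp only [hE]
    ring
  have hdeg_sum : ∑ i ∈ Z, eMult d Z i
      = ∑ s ∈ Finset.range (t + 1), (g (a + (s : ZMod γ)) : ℤ) + B t - 2 := by
    have h := hsum_e (Finset.range (t + 1)) (subset_refl _)
    rw [← hZ] at h
    rw [h, if_pos (mem_range.mpr (by omega)), if_pos (mem_range.mpr (by omega)),
      hsplitd]
    simp only [hB]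
    ring
  have hgsub : gSub g Z = ∑ s ∈ Finset.range (t + 1), (g (a + (s : ZMod γ)) : ℤ) := by
    unfold gSub
    rw [if_neg hZuniv]
    have h := hsumF (Finset.range (t + 1)) (subset_refl _) (fun i => (g i : ℤ))
    rw [← hZ] at h
    exact h
  have hdeg_iff : (∑ i ∈ Z, eMult d Z i = gSub g Z - 1) ↔ B t = 1 := by
    rw [hdeg_sum, hgsub]
    constructor <;> intro h <;> linarith
  constructor
  · rintro ⟨hne, hconn, heff, hdeg, hss⟩
    have hBt : B t = 1 := hdeg_iff.mp hdeg
    set S : Finset ℕ := (Finset.range (t + 1)).filter (fun s => E s ≠ 0) with hS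
    have hSmem : ∀ u : ℕ, u ∈ S ↔ (u ≤ t ∧ E u ≠ 0) := by
      intro u
      rw [hS, mem_filter, mem_range]
      constructor <;> rintro ⟨h1, h2⟩ <;> exact ⟨by omega, h2⟩
    have hSne : S.Nonempty := by
      by_contra hcon
      rw [Finset.not_nonempty_iff_eq_empty] at hcon
      have hz : B t = 0 := by
        simp only [hB]
        apply Finset.sum_eq_zero
        intro u hu
        by_contra hu0
        have : u ∈ S := (hSmem u).mpr ⟨by have := mem_range.mp hu; omega, hu0⟩
        rw [hcon] at this
        exact absurd this (notMem_empty u)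
      omega
    set s₁ := S.min' hSne with hs₁
    set s₂ := S.max' hSne with hs₂
    have hs₁S := S.min'_mem hSne
    have hs₂S := S.max'_mem hSne
    have hs₁t : s₁ ≤ t := ((hSmem _).mp hs₁S).1
    have hs₂t : s₂ ≤ t := ((hSmem _).mp hs₂S).1
    have hs₁ne : E s₁ ≠ 0 := ((hSmem _).mp hs₁S).2
    have hs₂ne : E s₂ ≠ 0 := ((hSmem _).mp hs₂S).2
    have hSmin : ∀ u ∈ S, s₁ ≤ u := fun u hu => S.min'_le u hu
    have hSmax : ∀ u ∈ S, u ≤ s₂ := fun u hu => S.le_max' u hu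
    have hEzero_lt : ∀ u, u < s₁ → E u = 0 := by
      intro u hu
      by_contra h0
      have := hSmin u ((hSmem u).mpr ⟨by omega, h0⟩)
      omega
    have hEzero_gt : ∀ u, s₂ < u → u ≤ t → E u = 0 := by
      intro u hu hut
      by_contra h0
      have := hSmax u ((hSmem u).mpr ⟨hut, h0⟩)
      omega
    have hBs₁ : B s₁ = E s₁ := by
      rcases Nat.eq_zero_or_pos s₁ with h0 | h0
      · rw [h0]
        exact hB0
      · have he : s₁ = (s₁ - 1) + 1 := by omega
        have h1 := hBsucc (s₁ - 1)
        rw [← he] at h1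
        have h2 : B (s₁ - 1) = 0 := by
          simp only [hB]
          apply Finset.sum_eq_zero
          intro u hu
          exact hEzero_lt u (by have := mem_range.mp hu; omega)
        omega
    have hEs₁ : E s₁ = 1 := by
      by_contra hcon
      have hEs₁m : E s₁ = -1 := by have := hEtri s₁; omega
      rcases eq_or_lt_of_le hs₁t with heq | hlt
      · have hcB : B t = -1 := by
          simp only [hB]
          rw [Finset.sum_eq_single_of_mem t (mem_range.mpr (by omega))]
          · rw [← heq, hEs₁m]
          · intro b hb hbt
            exact hEzero_lt b (by have := mem_range.mp hb; omega)
        omega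
      · have hrange_sub : Finset.range (s₁ + 1) ⊆ Finset.range (t + 1) := by
          intro u hu
          rw [mem_range] at *
          omega
        set Y : Finset (ZMod γ) :=
          (Finset.range (s₁ + 1)).image (fun s : ℕ => a + (s : ZMod γ)) with hY
        have hYsub : Y ⊆ Z := by
          rw [hY, hZ]
          exact Finset.image_subset_image hrange_sub
        have hYne : Y.Nonempty := by
          rw [hY]
          exact ⟨a + ((0 : ℕ) : ZMod γ),
            mem_image.mpr ⟨0, mem_range.mpr (by omega), rfl⟩⟩
        have hYneZ : Y ≠ Z := by
          intro hcon2
          have hmem : a + (t : ZMod γ) ∈ Y := by rw [hcon2]; exact hφZ t le_rfl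
          rw [hY] at hmem
          obtain ⟨u, hu, he⟩ := mem_image.mp hmem
          have hu' := mem_range.mp hu
          have := hinj u t (by omega) (by omega) he
          omega
        have hsemi := hss Y hYsub hYne hYneZ
        rw [hY] at hsemi
        rw [hsum_e _ hrange_sub, hsumF _ hrange_sub, hnC _ hrange_sub] at hsemi
        rw [if_pos (mem_range.mpr (by omega)),
          if_neg (fun hc => by have := mem_range.mp hc; omega),
          filter_range_start, card_singleton] at hsemi
        rw [hsplitd] at hsemi
        have hEsum : ∑ u ∈ Finset.range (s₁ + 1), E u = -1 := by
          have : B s₁ = -1 := by omega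
          simp only [hB] at this
          exact this
        rw [hEsum] at hsemi
        push_cast at hsemi
        linarith
    have hEs₂ : E s₂ = 1 := by
      by_contra hcon
      have hEs₂m : E s₂ = -1 := by have := hEtri s₂; omega
      rcases Nat.eq_zero_or_pos s₂ with h0 | h0
      · have hcB : B t = -1 := by
          simp only [hB]
          rw [Finset.sum_eq_single_of_mem 0 (mem_range.mpr (by omega))]
          · rw [← h0, hEs₂m]
          · intro b hb hb0
            exact hEzero_gt b (by omega) (by have := mem_range.mp hb; omega)
        omega
      · have hrange_sub : Finset.Icc s₂ t ⊆ Finset.range (t + 1) := by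
          intro u hu
          rw [mem_Icc] at hu
          rw [mem_range]
          omega
        set Y : Finset (ZMod γ) :=
          (Finset.Icc s₂ t).image (fun s : ℕ => a + (s : ZMod γ)) with hY
        have hYsub : Y ⊆ Z := by
          rw [hY, hZ]
          exact Finset.image_subset_image hrange_sub
        have hYne : Y.Nonempty := by
          rw [hY]
          exact ⟨a + (s₂ : ZMod γ),
            mem_image.mpr ⟨s₂, mem_Icc.mpr ⟨le_rfl, hs₂t⟩, rfl⟩⟩
        have hYneZ : Y ≠ Z := by
          intro hcon2
          have hmem : a + ((0 : ℕ) : ZMod γ) ∈ Y := by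
            rw [hcon2]
            exact hφZ 0 (by omega)
          rw [hY] at hmem
          obtain ⟨u, hu, he⟩ := mem_image.mp hmem
          rw [mem_Icc] at hu
          have := hinj u 0 (by omega) (by omega) he
          omega
        have hsemi := hss Y hYsub hYne hYneZ
        rw [hY] at hsemi
        rw [hsum_e _ hrange_sub, hsumF _ hrange_sub, hnC _ hrange_sub] at hsemi
        rw [if_neg (fun hc => by have := mem_Icc.mp hc; omega),
          if_pos (mem_Icc.mpr ⟨hs₂t, le_rfl⟩),
          filter_Icc_start s₂ t h0 hs₂t, card_singleton] at hsemi
        rw [hsplitd] at hsemi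
        have hEsum : ∑ u ∈ Finset.Icc s₂ t, E u = -1 := by
          rw [Finset.sum_eq_single_of_mem s₂ (mem_Icc.mpr ⟨le_rfl, hs₂t⟩)]
          · exact hEs₂m
          · intro b hb hbne
            rw [mem_Icc] at hb
            exact hEzero_gt b (by omega) hb.2
        rw [hEsum] at hsemi
        push_cast at hsemi
        linarith
    refine ⟨s₁, s₂, hs₁t, hs₂t, ?_, ?_, ?_⟩
    · simp only [hE] at hEs₁
      linarith
    · simp only [hE] at hEs₂
      linarith
    · intro s hst hd'
      have hEne : E s ≠ 0 := by
        simp only [hE]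
        rcases hd' with h | h <;> rw [h] <;> intro hc <;> omega
      have hsS : s ∈ S := (hSmem s).mpr ⟨hst, hEne⟩
      exact ⟨hSmin s hsS, hSmax s hsS⟩
  · rintro ⟨s₁, s₂, hs₁t, hs₂t, hd1, hd2, hbet⟩
    have hE1 : E s₁ = 1 := by simp only [hE]; omega
    have hE2 : E s₂ = 1 := by simp only [hE]; omega
    have hspec : ∀ s, s ≤ t → E s ≠ 0 → s₁ ≤ s ∧ s ≤ s₂ := by
      intro s hst hne
      apply hbet s hst
      have h3 := hE3 (a + (s : ZMod γ))
      simp only [hE] at hne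
      rcases h3 with h | h | h
      · exact Or.inl h
      · exact absurd h (by omega)
      · exact Or.inr h
    have hs₁₂ : s₁ ≤ s₂ := (hspec s₁ hs₁t (by omega)).2
    have hElt : ∀ u, u < s₁ → E u = 0 := by
      intro u hu
      by_contra h0
      have := hspec u (by omega) h0
      omega
    have hEgt : ∀ u, s₂ < u → u ≤ t → E u = 0 := by
      intro u hu hut
      by_contra h0
      have := hspec u hut h0
      omega
    have hBs₁ : B s₁ = 1 := by
      rcases Nat.eq_zero_or_pos s₁ with h0 | h0
      · rw [h0] at hE1 ⊢
        rw [hB0, hE1]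
      · have he : s₁ = (s₁ - 1) + 1 := by omega
        have h1 := hBsucc (s₁ - 1)
        rw [← he] at h1
        have h2 : B (s₁ - 1) = 0 := by
          simp only [hB]
          apply Finset.sum_eq_zero
          intro u hu
          exact hElt u (by have := mem_range.mp hu; omega)
        omega
    have hstep : ∀ i : ZMod γ, d i - (g i : ℤ)
        = fpm ℓ k j (repZ γ i) - fpm ℓ k j (repZ γ i - 1) :=
      stepLem γ ℓ k j hℓ hk1 hkj hjk hjγ g d hdk hdj hdo
    have hwrap : ∀ i : ZMod γ, fpm ℓ k j (repZ γ (i + 1) - 1) = fpm ℓ k j (repZ γ i) :=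
      wrapStep γ ℓ k j hℓ hk1 hkj hjk hjγ
    have hfb : ∀ x : ℕ, -1 ≤ fpm ℓ k j x ∧ fpm ℓ k j x ≤ 0 :=
      fpm_bounds γ ℓ k j hℓ hk1 hkj hjk hjγ
    have hBF : ∀ s : ℕ, B s
        = fpm ℓ k j (repZ γ (a + (s : ZMod γ))) - fpm ℓ k j (repZ γ a - 1) := by
      intro s
      induction s with
      | zero =>
        have h1 : a + ((0 : ℕ) : ZMod γ) = a := by
          simp
        rw [hB0]
        simp only [hE]
        rw [h1]
        exact hstep a
      | succ n ih =>
        rw [hBsucc, ih]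
        have h1 : E (n + 1)
            = fpm ℓ k j (repZ γ (a + ((n + 1 : ℕ) : ZMod γ)))
              - fpm ℓ k j (repZ γ (a + ((n + 1 : ℕ) : ZMod γ)) - 1) := by
          simp only [hE]
          exact hstep _
        have h2 : fpm ℓ k j (repZ γ (a + ((n + 1 : ℕ) : ZMod γ)) - 1)
            = fpm ℓ k j (repZ γ (a + (n : ZMod γ))) := by
          have hw := hwrap (a + (n : ZMod γ))
          rw [haddt n] at hw
          exact hw
        rw [h1, h2]
        ring
    have hCm1 : fpm ℓ k j (repZ γ a - 1) = -1 := by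
      have h := hBF s₁
      have hF := hfb (repZ γ (a + (s₁ : ZMod γ)))
      have hC := hfb (repZ γ a - 1)
      omega
    have hBrange : ∀ s : ℕ, 0 ≤ B s ∧ B s ≤ 1 := by
      intro s
      have h := hBF s
      have hF := hfb (repZ γ (a + (s : ZMod γ)))
      rw [hCm1] at h
      omega
    have hBs₂ : B s₂ = 1 := by
      rcases Nat.eq_zero_or_pos s₂ with h0 | h0
      · rw [h0] at hE2 ⊢
        rw [hB0, hE2]
      · have he : s₂ = (s₂ - 1) + 1 := by omega
        have h1 := hBsucc (s₂ - 1)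
        rw [← he] at h1
        have h2 := hBrange (s₂ - 1)
        have h3 := hBrange s₂
        omega
    have hBt1 : B t = 1 := by
      have hstepup : ∀ u, s₂ ≤ u → u ≤ t → B u = 1 := by
        intro u h1
        induction u, h1 using Nat.le_induction with
        | base => intro _; exact hBs₂
        | succ n hn ih =>
          intro hnt
          rw [hBsucc, ih (by omega), hEgt (n + 1) (by omega) hnt]
          ring
      exact hstepup t hs₂t le_rfl
    refine ⟨?_, Or.inr ?_, ?_, ?_, ?_⟩
    · exact ⟨a + ((0 : ℕ) : ZMod γ), hφZ 0 (by omega)⟩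
    · rw [hZ, hnC _ (subset_refl _), filter_range_start, card_singleton]
    · intro i hi
      obtain ⟨s, hst, he⟩ := (hmemZ i).mp hi
      subst he
      rw [heM s hst]
      have hgb : (1 : ℤ) ≤ (g (a + (s : ZMod γ)) : ℤ) := by exact_mod_cast hg _
      by_cases h0 : s = 0
      · by_cases ht0 : s = t
        · rw [if_pos h0, if_pos ht0]
          have ht00 : t = 0 := by omega
          have hbb : B 0 = 1 := by rw [← ht00]; exact hBt1
          have h2 := hB0
          simp only [hE] at h2
          rw [h0] at hgb ⊢
          omega
        · rw [if_pos h0, if_neg ht0]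
          have hbb := (hBrange 0).1
          have h2 := hB0
          simp only [hE] at h2
          rw [h0] at hgb ⊢
          omega
      · by_cases ht0 : s = t
        · rw [if_neg h0, if_pos ht0]
          have htne : t ≠ 0 := by omega
          have he2 : t = (t - 1) + 1 := by omega
          have h3 := hBsucc (t - 1)
          rw [← he2] at h3
          have h4 := (hBrange (t - 1)).2
          simp only [hE] at h3
          rw [ht0] at hgb ⊢
          omega
        · rw [if_neg h0, if_neg ht0]
          have := hEtri s
          simp only [hE] at this
          omega
    · exact hdeg_iff.mpr hBt1
    · intro Y hYZ hYne hYneZ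
      have hrep := hYrep Y hYZ
      set T := (Finset.range (t + 1)).filter (fun s : ℕ => a + (s : ZMod γ) ∈ Y) with hT
      have hTsub : T ⊆ Finset.range (t + 1) := filter_subset _ _
      have hKI := KI B t (fun s _ => (hBrange s).1) (fun s _ => (hBrange s).2) hBt1 T hTsub
      have hEB : ∀ s ∈ T, B s - (if s = 0 then 0 else B (s - 1)) = E s := by
        intro s _
        by_cases h0 : s = 0
        · rw [if_pos h0, h0, hB0]
          ring
        · rw [if_neg h0]
          have he : s = (s - 1) + 1 := by omega
          have h3 := hBsucc (s - 1)
          rw [← he] at h3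
          omega
      rw [Finset.sum_congr rfl hEB] at hKI
      rw [hrep, hsum_e T hTsub, hsumF T hTsub, hnC T hTsub, hsplitd]
      linarith
end
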